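/- For the Lie algebra g_ω and the general 15-parameter antisymmetric element r with cocommutator δ(X) := (ad_X⊗id + id⊗ad_X)(r), the Poisson-subgroup condition δ(J), δ(K₁), δ(K₂) ∈ h⊗h (where h = span{J,K₁,K₂}) holds if and only if a₁ = a₃ = a₄ = a₅ = b₁ = b₃ = b₄ = b₅ = c₃ = 0 and b₆ = c₁ = −a₆. This characterisation holds for every value of the parameter ω. -/

import Mathlib

open TensorProduct

/-- `x ∧ y = x ⊗ y − y ⊗ x`. -/
noncomputable def wedge {g : Type*} [AddCommGroup g] [Module ℝ g] (x y : g) :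
    TensorProduct ℝ g g := x ⊗ₜ[ℝ] y - y ⊗ₜ[ℝ] x

set_option maxHeartbeats 4000000 in
/-- For `g_ω` and the general 15-parameter antisymmetric `r` with
cocommutator `δ(X) = (ad_X⊗id + id⊗ad_X)(r)`, the Poisson-subgroup condition
`δ(J), δ(K₁), δ(K₂) ∈ h⊗h` with `h = span{J,K₁,K₂}` holds iff
`a₁=a₃=a₄=a₅=b₁=b₃=b₄=b₅=c₃=0` and `b₆=c₁=−a₆`, for every value of `ω`. -/
theorem poisson_subgroup_condition_g_omega
    (ω : ℝ) (g : Type*) [LieRing g] [LieAlgebra ℝ g]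
    (J P0 P1 P2 K1 K2 : g)
    (hind : LinearIndependent ℝ ![J, P0, P1, P2, K1, K2])
    (hspan : Submodule.span ℝ (Set.range ![J, P0, P1, P2, K1, K2]) = ⊤)
    (hJP1 : ⁅J, P1⁆ = P2) (hJP2 : ⁅J, P2⁆ = -P1)
    (hJK1 : ⁅J, K1⁆ = K2) (hJK2 : ⁅J, K2⁆ = -K1) (hJP0 : ⁅J, P0⁆ = 0)
    (hP1K1 : ⁅P1, K1⁆ = -P0) (hP2K2 : ⁅P2, K2⁆ = -P0)
    (hP1K2 : ⁅P1, K2⁆ = 0) (hP2K1 : ⁅P2, K1⁆ = 0)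
    (hP0K1 : ⁅P0, K1⁆ = -P1) (hP0K2 : ⁅P0, K2⁆ = -P2)
    (hK1K2 : ⁅K1, K2⁆ = -J)
    (hP0P1 : ⁅P0, P1⁆ = ω • K1) (hP0P2 : ⁅P0, P2⁆ = ω • K2)
    (hP1P2 : ⁅P1, P2⁆ = -(ω • J))
    (a1 a2 a3 a4 a5 a6 b1 b2 b3 b4 b5 b6 c1 c2 c3 : ℝ)
    (r : TensorProduct ℝ g g)
    (hr : r = a1 • wedge J P1 + a2 • wedge J K1 + a3 • wedge P0 P1 + a4 • wedge P0 K1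
      + a5 • wedge P1 K1 + a6 • wedge P1 K2 + b1 • wedge J P2 + b2 • wedge J K2
      + b3 • wedge P0 P2 + b4 • wedge P0 K2 + b5 • wedge P2 K2 + b6 • wedge P2 K1
      + c1 • wedge J P0 + c2 • wedge K1 K2 + c3 • wedge P1 P2)
    (δ : g → TensorProduct ℝ g g)
    (hδ : ∀ X : g, δ X =
      (TensorProduct.map (LieAlgebra.ad ℝ g X : g →ₗ[ℝ] g) (LinearMap.id : g →ₗ[ℝ] g)
        + TensorProduct.map (LinearMap.id : g →ₗ[ℝ] g)
            (LieAlgebra.ad ℝ g X : g →ₗ[ℝ] g)) r) :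
    let h : Submodule ℝ g := Submodule.span ℝ {J, K1, K2}
    let hh : Submodule ℝ (TensorProduct ℝ g g) :=
      LinearMap.range (TensorProduct.map h.subtype h.subtype)
    ((δ J ∈ hh ∧ δ K1 ∈ hh ∧ δ K2 ∈ hh) ↔
      (a1 = 0 ∧ a3 = 0 ∧ a4 = 0 ∧ a5 = 0 ∧ b1 = 0 ∧ b3 = 0 ∧ b4 = 0 ∧ b5 = 0 ∧
        c3 = 0 ∧ b6 = -a6 ∧ c1 = -a6)) := by
  intro hS hhS
  have hdef : hS = Submodule.span ℝ {J, K1, K2} := rfl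
  have hhdef : hhS = LinearMap.range (TensorProduct.map hS.subtype hS.subtype) := rfl
  -- reversed brackets
  have hK1J : ⁅K1, J⁆ = -K2 := by rw [← lie_skew, hJK1]
  have hK1P0 : ⁅K1, P0⁆ = P1 := by rw [← lie_skew, hP0K1, neg_neg]
  have hK1P1 : ⁅K1, P1⁆ = P0 := by rw [← lie_skew, hP1K1, neg_neg]
  have hK1P2 : ⁅K1, P2⁆ = 0 := by rw [← lie_skew, hP2K1, neg_zero]
  have hK2J : ⁅K2, J⁆ = K1 := by rw [← lie_skew, hJK2, neg_neg]
  have hK2P0 : ⁅K2, P0⁆ = P2 := by rw [← lie_skew, hP0K2, neg_neg]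
  have hK2P1 : ⁅K2, P1⁆ = 0 := by rw [← lie_skew, hP1K2, neg_zero]
  have hK2P2 : ⁅K2, P2⁆ = P0 := by rw [← lie_skew, hP2K2, neg_neg]
  have hK2K1 : ⁅K2, K1⁆ = J := by rw [← lie_skew, hK1K2, neg_neg]
  -- explicit cocommutators
  have eJ : δ J = (-b1) • wedge J P1 + a1 • wedge J P2 + (-b2) • wedge J K1
      + a2 • wedge J K2 + (-b3) • wedge P0 P1 + a3 • wedge P0 P2
      + (-b4) • wedge P0 K1 + a4 • wedge P0 K2 + (-(a6+b6)) • wedge P1 K1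
      + (a5-b5) • wedge P1 K2 + (a5-b5) • wedge P2 K1 + (a6+b6) • wedge P2 K2 := by
    rw [hδ, hr]
    simp only [wedge, map_add, map_smul, map_sub, LinearMap.add_apply,
      TensorProduct.map_tmul, LinearMap.id_coe, id_eq, LieAlgebra.ad_apply,
      hJP1, hJP2, hJK1, hJK2, hJP0, lie_self,
      TensorProduct.tmul_neg, TensorProduct.neg_tmul,
      TensorProduct.tmul_zero, TensorProduct.zero_tmul]
    module
  have eK1 : δ K1 = (a1+b4) • wedge J P0 + (a6+c1) • wedge J P1 + b5 • wedge J P2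
      + c2 • wedge J K1 + a5 • wedge P0 K1 + (a6+c1) • wedge P0 K2
      + c3 • wedge P0 P2 + a4 • wedge P1 K1 + (a1+b4) • wedge P1 K2
      + b3 • wedge P1 P2 + b1 • wedge P2 K2 + a2 • wedge K1 K2 := by
    rw [hδ, hr]
    simp only [wedge, map_add, map_smul, map_sub, LinearMap.add_apply,
      TensorProduct.map_tmul, LinearMap.id_coe, id_eq, LieAlgebra.ad_apply,
      hK1J, hK1P0, hK1P1, hK1P2, hK1K2, lie_self,
      TensorProduct.tmul_neg, TensorProduct.neg_tmul,
      TensorProduct.tmul_zero, TensorProduct.zero_tmul]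
    module
  have eK2 : δ K2 = (b1-a4) • wedge J P0 + (-a5) • wedge J P1 + (c1-b6) • wedge J P2
      + c2 • wedge J K2 + (b6-c1) • wedge P0 K1 + b5 • wedge P0 K2
      + (-c3) • wedge P0 P1 + (-a1) • wedge P1 K1 + (-a3) • wedge P1 P2
      + (a4-b1) • wedge P2 K1 + b4 • wedge P2 K2 + b2 • wedge K1 K2 := by
    rw [hδ, hr]
    simp only [wedge, map_add, map_smul, map_sub, LinearMap.add_apply,
      TensorProduct.map_tmul, LinearMap.id_coe, id_eq, LieAlgebra.ad_apply,
      hK2J, hK2P0, hK2P1, hK2P2, hK2K1, lie_self,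
      TensorProduct.tmul_neg, TensorProduct.neg_tmul,
      TensorProduct.tmul_zero, TensorProduct.zero_tmul]
    module
  -- basis and coordinates
  let B : Module.Basis (Fin 6) ℝ g := Module.Basis.mk hind (by rw [hspan])
  have hBv : ∀ i, B i = ![J, P0, P1, P2, K1, K2] i := fun i => Module.Basis.mk_apply hind _ i
  have hcoord : ∀ i j : Fin 6, B.coord i (![J, P0, P1, P2, K1, K2] j)
      = if j = i then 1 else 0 := by
    intro i j
    rw [← hBv j, Module.Basis.coord_apply, Module.Basis.repr_self, Finsupp.single_apply]
  have c0J : B.coord 0 J = 1 := by simpa using hcoord 0 0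
  have c0P0 : B.coord 0 P0 = 0 := by simpa using hcoord 0 1
  have c0P1 : B.coord 0 P1 = 0 := by simpa using hcoord 0 2
  have c0P2 : B.coord 0 P2 = 0 := by simpa using hcoord 0 3
  have c0K1 : B.coord 0 K1 = 0 := by simpa using hcoord 0 4
  have c0K2 : B.coord 0 K2 = 0 := by simpa using hcoord 0 5
  have c1J : B.coord 1 J = 0 := by simpa using hcoord 1 0
  have c1P0 : B.coord 1 P0 = 1 := by simpa using hcoord 1 1
  have c1P1 : B.coord 1 P1 = 0 := by simpa using hcoord 1 2
  have c1P2 : B.coord 1 P2 = 0 := by simpa using hcoord 1 3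
  have c1K1 : B.coord 1 K1 = 0 := by simpa using hcoord 1 4
  have c1K2 : B.coord 1 K2 = 0 := by simpa using hcoord 1 5
  have c2J : B.coord 2 J = 0 := by simpa using hcoord 2 0
  have c2P0 : B.coord 2 P0 = 0 := by simpa using hcoord 2 1
  have c2P1 : B.coord 2 P1 = 1 := by simpa using hcoord 2 2
  have c2P2 : B.coord 2 P2 = 0 := by simpa using hcoord 2 3
  have c2K1 : B.coord 2 K1 = 0 := by simpa using hcoord 2 4
  have c2K2 : B.coord 2 K2 = 0 := by simpa using hcoord 2 5
  have c3J : B.coord 3 J = 0 := by simpa using hcoord 3 0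
  have c3P0 : B.coord 3 P0 = 0 := by simpa using hcoord 3 1
  have c3P1 : B.coord 3 P1 = 0 := by simpa using hcoord 3 2
  have c3P2 : B.coord 3 P2 = 1 := by simpa using hcoord 3 3
  have c3K1 : B.coord 3 K1 = 0 := by simpa using hcoord 3 4
  have c3K2 : B.coord 3 K2 = 0 := by simpa using hcoord 3 5
  have c4J : B.coord 4 J = 0 := by simpa using hcoord 4 0
  have c4P0 : B.coord 4 P0 = 0 := by simpa using hcoord 4 1
  have c4P1 : B.coord 4 P1 = 0 := by simpa using hcoord 4 2
  have c4P2 : B.coord 4 P2 = 0 := by simpa using hcoord 4 3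
  have c4K1 : B.coord 4 K1 = 1 := by simpa using hcoord 4 4
  have c4K2 : B.coord 4 K2 = 0 := by simpa using hcoord 4 5
  have c5J : B.coord 5 J = 0 := by simpa using hcoord 5 0
  have c5P0 : B.coord 5 P0 = 0 := by simpa using hcoord 5 1
  have c5P1 : B.coord 5 P1 = 0 := by simpa using hcoord 5 2
  have c5P2 : B.coord 5 P2 = 0 := by simpa using hcoord 5 3
  have c5K1 : B.coord 5 K1 = 0 := by simpa using hcoord 5 4
  have c5K2 : B.coord 5 K2 = 1 := by simpa using hcoord 5 5
  have hmemJ : J ∈ hS := by rw [hdef]; exact Submodule.subset_span (by simp)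
  have hmemK1 : K1 ∈ hS := by rw [hdef]; exact Submodule.subset_span (by simp)
  have hmemK2 : K2 ∈ hS := by rw [hdef]; exact Submodule.subset_span (by simp)
  have hmemcoord : ∀ i : Fin 6, B.coord i J = 0 → B.coord i K1 = 0 → B.coord i K2 = 0 →
      ∀ v ∈ hS, B.coord i v = 0 := by
    intro i h1 h2 h3 v hv
    rw [hdef] at hv
    induction hv using Submodule.span_induction with
    | mem x hx =>
      simp only [Set.mem_insert_iff, Set.mem_singleton_iff] at hx
      rcases hx with rfl | rfl | rfl <;> assumption
    | zero => simp
    | add u v _ _ hu hv => simp only [map_add, hu, hv, add_zero]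
    | smul a u _ hu => simp only [map_smul, hu, smul_zero]
  have hF : ∀ (fi fj : g →ₗ[ℝ] ℝ) (x y : g),
      ((TensorProduct.lid ℝ ℝ).toLinearMap.comp (TensorProduct.map fi fj)) (x ⊗ₜ[ℝ] y)
        = fi x * fj y := by
    intros; simp
  have keyL : ∀ (fi fj : g →ₗ[ℝ] ℝ), (∀ v ∈ hS, fi v = 0) → ∀ t ∈ hhS,
      ((TensorProduct.lid ℝ ℝ).toLinearMap.comp (TensorProduct.map fi fj)) t = 0 := by
    intro fi fj hfi t ht
    rw [hhdef] at ht
    obtain ⟨s, rfl⟩ := ht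
    induction s using TensorProduct.induction_on with
    | zero => simp only [map_zero]
    | tmul x y =>
      simp only [TensorProduct.map_tmul, Submodule.subtype_apply, hF, hfi x.1 x.2, zero_mul]
    | add u v hu hv => simp only [map_add, hu, hv, add_zero]
  have keyR : ∀ (fi fj : g →ₗ[ℝ] ℝ), (∀ v ∈ hS, fj v = 0) → ∀ t ∈ hhS,
      ((TensorProduct.lid ℝ ℝ).toLinearMap.comp (TensorProduct.map fi fj)) t = 0 := by
    intro fi fj hfj t ht
    rw [hhdef] at ht
    obtain ⟨s, rfl⟩ := ht
    induction s using TensorProduct.induction_on with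
    | zero => simp only [map_zero]
    | tmul x y =>
      simp only [TensorProduct.map_tmul, Submodule.subtype_apply, hF, hfj y.1 y.2, mul_zero]
    | add u v hu hv => simp only [map_add, hu, hv, add_zero]
  have hw : ∀ x y : g, x ∈ hS → y ∈ hS → wedge x y ∈ hhS := by
    intro x y hx hy
    rw [hhdef]
    exact ⟨(⟨x, hx⟩ : hS) ⊗ₜ[ℝ] (⟨y, hy⟩ : hS) - (⟨y, hy⟩ : hS) ⊗ₜ[ℝ] (⟨x, hx⟩ : hS),
      by simp [wedge]⟩
  constructor
  · rintro ⟨hdJ, hdK1, hdK2⟩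
    have t1 : a1 = 0 := by
      have h0 := keyL (B.coord 2) (B.coord 4) (hmemcoord 2 c2J c2K1 c2K2) _ hdK2
      rw [eK2] at h0
      simp only [map_add, map_smul, map_sub, wedge, hF, c0J, c0P0, c0P1, c0P2, c0K1, c0K2, c1J, c1P0, c1P1, c1P2, c1K1, c1K2, c2J, c2P0, c2P1, c2P2, c2K1, c2K2, c3J, c3P0, c3P1, c3P2, c3K1, c3K2, c4J, c4P0, c4P1, c4P2, c4K1, c4K2, c5J, c5P0, c5P1, c5P2, c5K1, c5K2,
        mul_zero, zero_mul, mul_one, one_mul, add_zero, zero_add, sub_zero, zero_sub,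
        smul_eq_mul, smul_zero, neg_zero] at h0
      linarith
    have t2 : a3 = 0 := by
      have h0 := keyL (B.coord 2) (B.coord 3) (hmemcoord 2 c2J c2K1 c2K2) _ hdK2
      rw [eK2] at h0
      simp only [map_add, map_smul, map_sub, wedge, hF, c0J, c0P0, c0P1, c0P2, c0K1, c0K2, c1J, c1P0, c1P1, c1P2, c1K1, c1K2, c2J, c2P0, c2P1, c2P2, c2K1, c2K2, c3J, c3P0, c3P1, c3P2, c3K1, c3K2, c4J, c4P0, c4P1, c4P2, c4K1, c4K2, c5J, c5P0, c5P1, c5P2, c5K1, c5K2,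
        mul_zero, zero_mul, mul_one, one_mul, add_zero, zero_add, sub_zero, zero_sub,
        smul_eq_mul, smul_zero, neg_zero] at h0
      linarith
    have t10 : b1 = 0 := by
      have h0 := keyL (B.coord 3) (B.coord 5) (hmemcoord 3 c3J c3K1 c3K2) _ hdK1
      rw [eK1] at h0
      simp only [map_add, map_smul, map_sub, wedge, hF, c0J, c0P0, c0P1, c0P2, c0K1, c0K2, c1J, c1P0, c1P1, c1P2, c1K1, c1K2, c2J, c2P0, c2P1, c2P2, c2K1, c2K2, c3J, c3P0, c3P1, c3P2, c3K1, c3K2, c4J, c4P0, c4P1, c4P2, c4K1, c4K2, c5J, c5P0, c5P1, c5P2, c5K1, c5K2,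
        mul_zero, zero_mul, mul_one, one_mul, add_zero, zero_add, sub_zero, zero_sub,
        smul_eq_mul, smul_zero, neg_zero] at h0
      linarith
    have t3 : a4 = 0 := by
      have h0 := keyL (B.coord 3) (B.coord 4) (hmemcoord 3 c3J c3K1 c3K2) _ hdK2
      rw [eK2] at h0
      simp only [map_add, map_smul, map_sub, wedge, hF, c0J, c0P0, c0P1, c0P2, c0K1, c0K2, c1J, c1P0, c1P1, c1P2, c1K1, c1K2, c2J, c2P0, c2P1, c2P2, c2K1, c2K2, c3J, c3P0, c3P1, c3P2, c3K1, c3K2, c4J, c4P0, c4P1, c4P2, c4K1, c4K2, c5J, c5P0, c5P1, c5P2, c5K1, c5K2,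
        mul_zero, zero_mul, mul_one, one_mul, add_zero, zero_add, sub_zero, zero_sub,
        smul_eq_mul, smul_zero, neg_zero] at h0
      linarith
    have t4 : a5 = 0 := by
      have h0 := keyR (B.coord 0) (B.coord 2) (hmemcoord 2 c2J c2K1 c2K2) _ hdK2
      rw [eK2] at h0
      simp only [map_add, map_smul, map_sub, wedge, hF, c0J, c0P0, c0P1, c0P2, c0K1, c0K2, c1J, c1P0, c1P1, c1P2, c1K1, c1K2, c2J, c2P0, c2P1, c2P2, c2K1, c2K2, c3J, c3P0, c3P1, c3P2, c3K1, c3K2, c4J, c4P0, c4P1, c4P2, c4K1, c4K2, c5J, c5P0, c5P1, c5P2, c5K1, c5K2,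
        mul_zero, zero_mul, mul_one, one_mul, add_zero, zero_add, sub_zero, zero_sub,
        smul_eq_mul, smul_zero, neg_zero] at h0
      linarith
    have t5 : b4 = 0 := by
      have h0 := keyL (B.coord 3) (B.coord 5) (hmemcoord 3 c3J c3K1 c3K2) _ hdK2
      rw [eK2] at h0
      simp only [map_add, map_smul, map_sub, wedge, hF, c0J, c0P0, c0P1, c0P2, c0K1, c0K2, c1J, c1P0, c1P1, c1P2, c1K1, c1K2, c2J, c2P0, c2P1, c2P2, c2K1, c2K2, c3J, c3P0, c3P1, c3P2, c3K1, c3K2, c4J, c4P0, c4P1, c4P2, c4K1, c4K2, c5J, c5P0, c5P1, c5P2, c5K1, c5K2,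
        mul_zero, zero_mul, mul_one, one_mul, add_zero, zero_add, sub_zero, zero_sub,
        smul_eq_mul, smul_zero, neg_zero] at h0
      linarith
    have t6 : b5 = 0 := by
      have h0 := keyL (B.coord 1) (B.coord 5) (hmemcoord 1 c1J c1K1 c1K2) _ hdK2
      rw [eK2] at h0
      simp only [map_add, map_smul, map_sub, wedge, hF, c0J, c0P0, c0P1, c0P2, c0K1, c0K2, c1J, c1P0, c1P1, c1P2, c1K1, c1K2, c2J, c2P0, c2P1, c2P2, c2K1, c2K2, c3J, c3P0, c3P1, c3P2, c3K1, c3K2, c4J, c4P0, c4P1, c4P2, c4K1, c4K2, c5J, c5P0, c5P1, c5P2, c5K1, c5K2,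
        mul_zero, zero_mul, mul_one, one_mul, add_zero, zero_add, sub_zero, zero_sub,
        smul_eq_mul, smul_zero, neg_zero] at h0
      linarith
    have t7 : b6 - c1 = 0 := by
      have h0 := keyL (B.coord 1) (B.coord 4) (hmemcoord 1 c1J c1K1 c1K2) _ hdK2
      rw [eK2] at h0
      simp only [map_add, map_smul, map_sub, wedge, hF, c0J, c0P0, c0P1, c0P2, c0K1, c0K2, c1J, c1P0, c1P1, c1P2, c1K1, c1K2, c2J, c2P0, c2P1, c2P2, c2K1, c2K2, c3J, c3P0, c3P1, c3P2, c3K1, c3K2, c4J, c4P0, c4P1, c4P2, c4K1, c4K2, c5J, c5P0, c5P1, c5P2, c5K1, c5K2,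
        mul_zero, zero_mul, mul_one, one_mul, add_zero, zero_add, sub_zero, zero_sub,
        smul_eq_mul, smul_zero, neg_zero] at h0
      linarith
    have t8 : c3 = 0 := by
      have h0 := keyL (B.coord 1) (B.coord 2) (hmemcoord 1 c1J c1K1 c1K2) _ hdK2
      rw [eK2] at h0
      simp only [map_add, map_smul, map_sub, wedge, hF, c0J, c0P0, c0P1, c0P2, c0K1, c0K2, c1J, c1P0, c1P1, c1P2, c1K1, c1K2, c2J, c2P0, c2P1, c2P2, c2K1, c2K2, c3J, c3P0, c3P1, c3P2, c3K1, c3K2, c4J, c4P0, c4P1, c4P2, c4K1, c4K2, c5J, c5P0, c5P1, c5P2, c5K1, c5K2,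
        mul_zero, zero_mul, mul_one, one_mul, add_zero, zero_add, sub_zero, zero_sub,
        smul_eq_mul, smul_zero, neg_zero] at h0
      linarith
    have t9 : a6 + c1 = 0 := by
      have h0 := keyR (B.coord 0) (B.coord 2) (hmemcoord 2 c2J c2K1 c2K2) _ hdK1
      rw [eK1] at h0
      simp only [map_add, map_smul, map_sub, wedge, hF, c0J, c0P0, c0P1, c0P2, c0K1, c0K2, c1J, c1P0, c1P1, c1P2, c1K1, c1K2, c2J, c2P0, c2P1, c2P2, c2K1, c2K2, c3J, c3P0, c3P1, c3P2, c3K1, c3K2, c4J, c4P0, c4P1, c4P2, c4K1, c4K2, c5J, c5P0, c5P1, c5P2, c5K1, c5K2,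
        mul_zero, zero_mul, mul_one, one_mul, add_zero, zero_add, sub_zero, zero_sub,
        smul_eq_mul, smul_zero, neg_zero] at h0
      linarith
    have t11 : b3 = 0 := by
      have h0 := keyL (B.coord 2) (B.coord 3) (hmemcoord 2 c2J c2K1 c2K2) _ hdK1
      rw [eK1] at h0
      simp only [map_add, map_smul, map_sub, wedge, hF, c0J, c0P0, c0P1, c0P2, c0K1, c0K2, c1J, c1P0, c1P1, c1P2, c1K1, c1K2, c2J, c2P0, c2P1, c2P2, c2K1, c2K2, c3J, c3P0, c3P1, c3P2, c3K1, c3K2, c4J, c4P0, c4P1, c4P2, c4K1, c4K2, c5J, c5P0, c5P1, c5P2, c5K1, c5K2,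
        mul_zero, zero_mul, mul_one, one_mul, add_zero, zero_add, sub_zero, zero_sub,
        smul_eq_mul, smul_zero, neg_zero] at h0
      linarith
    refine ⟨t1, t2, t3, t4, t10, t11, t5, t6, t8, by linarith, by linarith⟩
  · rintro ⟨h1, h2, h3, h4, h5, h6, h7, h8, h9, h10, h11⟩
    subst h1 h2 h3 h4 h5 h6 h7 h8 h9 h10 h11
    simp only [neg_zero, zero_smul, add_zero, zero_add, add_neg_cancel, sub_self,
      sub_zero, zero_sub] at eJ eK1 eK2
    refine ⟨?_, ?_, ?_⟩
    · rw [eJ]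
      exact add_mem (Submodule.smul_mem _ _ (hw _ _ hmemJ hmemK1))
        (Submodule.smul_mem _ _ (hw _ _ hmemJ hmemK2))
    · rw [eK1]
      exact add_mem (Submodule.smul_mem _ _ (hw _ _ hmemJ hmemK1))
        (Submodule.smul_mem _ _ (hw _ _ hmemK1 hmemK2))
    · rw [eK2]
      exact add_mem (Submodule.smul_mem _ _ (hw _ _ hmemJ hmemK2))
        (Submodule.smul_mem _ _ (hw _ _ hmemK1 hmemK2))
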